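/- Let a > 0, τ > 0, and let γ ∈ ℝ with |γ| > t_{a,τ}, where t_{a,τ} = τa if τ ≤ 1/(2a²) and t_{a,τ} = √(2τ) − 1/(2a) if τ > 1/(2a²). Then the minimum value of f_{a,τ}(β) = (1/2)(β−γ)² + τ·a|β|/(a|β|+1) is strictly less than f_{a,τ}(0) = γ²/2; in particular, β = 0 is not a global minimizer of f_{a,τ}, so every global minimizer of f_{a,τ} is nonzero. -/

import Mathlib

/-- If `|γ|` exceeds the threshold `t_{a,τ}`, then the infimum of
`f_{a,τ}(β) = (1/2)(β−γ)² + τ·a|β|/(a|β|+1)` is strictly less than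
`f_{a,τ}(0) = γ²/2`: some `β` has strictly smaller value, and every global
minimizer of `f_{a,τ}` is nonzero. -/
theorem zero_not_minimizer_above_threshold (a τ γ : ℝ) (ha : 0 < a) (hτ : 0 < τ)
    (t : ℝ)
    (ht : t = if τ ≤ 1 / (2 * a ^ 2) then τ * a else Real.sqrt (2 * τ) - 1 / (2 * a))
    (hγ : |γ| > t)
    (f : ℝ → ℝ)
    (hf : ∀ β, f β = (1 / 2) * (β - γ) ^ 2 + τ * (a * |β| / (a * |β| + 1))) :
    (∃ β : ℝ, f β < γ ^ 2 / 2) ∧ f 0 = γ ^ 2 / 2 ∧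
    ∀ βs : ℝ, (∀ β : ℝ, f βs ≤ f β) → βs ≠ 0 := by
  -- find a good b > 0
  obtain ⟨b, hb, hlt⟩ : ∃ b : ℝ, 0 < b ∧ b / 2 + τ * a / (a * b + 1) < |γ| := by
    by_cases hc : τ ≤ 1 / (2 * a ^ 2)
    · have ht' : t = τ * a := by rw [ht, if_pos hc]
      have hγ' : τ * a < |γ| := ht' ▸ hγ
      refine ⟨|γ| - τ * a, by linarith, ?_⟩
      have hd : (1 : ℝ) < a * (|γ| - τ * a) + 1 := by nlinarith
      have h2 : τ * a / (a * (|γ| - τ * a) + 1) < τ * a :=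
        div_lt_self (by positivity) hd
      linarith
    · have ht' : t = Real.sqrt (2 * τ) - 1 / (2 * a) := by rw [ht, if_neg hc]
      push_neg at hc
      set s := Real.sqrt (2 * τ) with hs
      have hs0 : 0 ≤ s := Real.sqrt_nonneg _
      have hs2 : s ^ 2 = 2 * τ := Real.sq_sqrt (by positivity)
      have hsgt : 1 / a < s := by
        rw [hs]
        rw [show (1 : ℝ) / a = Real.sqrt ((1 / a) ^ 2) from
          (Real.sqrt_sq (by positivity)).symm]
        apply Real.sqrt_lt_sqrt (by positivity)
        rw [div_pow, one_pow]
        rw [div_lt_iff₀ (by positivity)] at hc ⊢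
        nlinarith
      refine ⟨s - 1 / a, by linarith, ?_⟩
      have hd : a * (s - 1 / a) + 1 = a * s := by field_simp; ring
      rw [hd]
      have hspos : 0 < s := lt_trans (by positivity) hsgt
      have hval : (s - 1 / a) / 2 + τ * a / (a * s) = s - 1 / (2 * a) := by
        field_simp
        linear_combination (-a) * hs2
      rw [hval]
      calc s - 1 / (2 * a) = t := ht'.symm
        _ < |γ| := hγ
  set β : ℝ := if 0 ≤ γ then b else -b with hβ
  have habs : |β| = b := by
    rw [hβ]; split <;> simp [abs_of_pos hb, abs_of_neg, hb, abs_of_neg (neg_neg_iff_pos.mpr hb)]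
  have hsq : (β - γ) ^ 2 = (b - |γ|) ^ 2 := by
    rw [hβ]
    by_cases h : 0 ≤ γ
    · rw [if_pos h, abs_of_nonneg h]
    · rw [if_neg h, abs_of_neg (not_le.mp h)]; ring
  have hdpos : 0 < a * b + 1 := by positivity
  have hfb : f β < γ ^ 2 / 2 := by
    rw [hf, habs, hsq]
    have h1 : b * (b / 2 + τ * a / (a * b + 1)) < b * |γ| :=
      mul_lt_mul_of_pos_left hlt hb
    have habs2 : |γ| ^ 2 = γ ^ 2 := sq_abs γ
    have hexp : b * (b / 2 + τ * a / (a * b + 1)) = b ^ 2 / 2 + τ * (a * b / (a * b + 1)) := by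
      field_simp
    nlinarith [h1, hexp]
  refine ⟨⟨β, hfb⟩, ?_, ?_⟩
  · rw [hf]; simp; ring
  · intro βs hmin hzero
    have := hmin β
    rw [hzero, hf 0] at this
    simp at this
    linarith
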